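/- Let G be a finite simple graph on a vertex set W with |W| = N, let m ≥ 2 and t be integers with 2t ≥ N, and consider the m-blowup G' of G. Then the minimum, over all pairs of sets V1, V2 ⊆ W × {1,…,m} with V1 ∪ V2 = W × {1,…,m} and |V1| = |V2| = t·m, of the number of edges of G' having one endpoint in V1 ∖ V2 and the other in V2 ∖ V1, is either equal to 0 or at least m²/4. -/

import Mathlib

open Finset

/-- The cost of a (possibly replicated) bipartition `(V1, V2)` of the vertex set of a simple
graph `G`: the number of edges of `G` having one endpoint in `V1 \ V2` and the other in
`V2 \ V1`. -/
def repCost {V : Type*} [Fintype V] [DecidableEq V] (G : SimpleGraph V) [DecidableRel G.Adj]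
    (V1 V2 : Finset V) : ℕ :=
  (G.edgeFinset.filter (fun e => ∃ a ∈ V1 \ V2, ∃ b ∈ V2 \ V1, e = s(a, b))).card

/-- The `m`-blowup of a simple graph `G` on `W`: the graph on `W × Fin m` where `(u, i)` and
`(v, j)` are adjacent iff either `u = v` and `i ≠ j`, or `u` and `v` are adjacent in `G`. -/
def blowup {W : Type*} (G : SimpleGraph W) (m : ℕ) : SimpleGraph (W × Fin m) where
  Adj x y := (x.1 = y.1 ∧ x.2 ≠ y.2) ∨ G.Adj x.1 y.1
  symm := by
    constructor
    intro x y h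
    rcases h with ⟨h1, h2⟩ | h
    · exact Or.inl ⟨h1.symm, h2.symm⟩
    · exact Or.inr h.symm
  loopless := by
    constructor
    intro x h
    rcases h with ⟨_, h2⟩ | h
    · exact h2 rfl
    · exact G.irrefl h

instance {W : Type*} [DecidableEq W] (G : SimpleGraph W) [DecidableRel G.Adj] (m : ℕ) :
    DecidableRel (blowup G m).Adj :=
  fun x y => inferInstanceAs (Decidable ((x.1 = y.1 ∧ x.2 ≠ y.2) ∨ G.Adj x.1 y.1))


private lemma core_lb {W : Type*} [Fintype W] [DecidableEq W] (G : SimpleGraph W)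
    [DecidableRel G.Adj] (m k : ℕ) (hk : 1 ≤ k) (hkN : k ≤ Fintype.card W)
    (H : ∀ S T : Finset W, S.card = k → T.card = k → Disjoint S T →
        (∀ u ∈ S, ∀ v ∈ T, ¬ G.Adj u v) → False)
    (a b : W → ℕ) (ham : ∀ u, a u ≤ m) (hbm : ∀ u, b u ≤ m)
    (hsa : ∑ u, a u = k * m) (hsb : ∑ u, b u = k * m)
    (g : W → ℕ) (hgdef : ∀ u, g u = ∑ v, if u = v ∨ G.Adj u v then b v else 0) :
    m * m ≤ ∑ u, a u * g u := by
  classical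
  obtain ⟨S₀, hS₀mem, hS₀min⟩ := Finset.exists_min_image
    ((univ : Finset W).powersetCard k) (fun S => ∑ u ∈ S, g u)
    (by rw [Finset.powersetCard_nonempty, Finset.card_univ]; exact hkN)
  rw [Finset.mem_powersetCard] at hS₀mem
  obtain ⟨-, hS₀card⟩ := hS₀mem
  -- exchange property
  have hswap : ∀ v, v ∉ S₀ → ∀ u ∈ S₀, g u ≤ g v := by
    intro v hv u hu
    by_contra hlt
    push_neg at hlt
    have hvne : v ∉ S₀.erase u := fun h => hv (Finset.mem_of_mem_erase h)
    have hmem : insert v (S₀.erase u) ∈ (univ : Finset W).powersetCard k := by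
      rw [Finset.mem_powersetCard]
      refine ⟨Finset.subset_univ _, ?_⟩
      rw [Finset.card_insert_of_notMem hvne, Finset.card_erase_of_mem hu, hS₀card]
      omega
    have h2 : ∑ x ∈ insert v (S₀.erase u), g x < ∑ x ∈ S₀, g x := by
      rw [Finset.sum_insert hvne]
      calc g v + ∑ x ∈ S₀.erase u, g x < g u + ∑ x ∈ S₀.erase u, g x := by omega
        _ = ∑ x ∈ S₀, g x := Finset.add_sum_erase _ _ hu
    exact absurd (hS₀min _ hmem) (by omega)
  -- closed neighborhood of S₀
  set Nb : Finset W := univ.filter (fun v => ∃ u ∈ S₀, u = v ∨ G.Adj u v) with hNbdef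
  have hNbc : (univ \ Nb).card < k := by
    by_contra hcon
    push_neg at hcon
    obtain ⟨T, hTsub, hTcard⟩ := Finset.exists_subset_card_eq hcon
    refine H S₀ T hS₀card hTcard ?_ ?_
    · rw [Finset.disjoint_left]
      intro u huS huT
      have h := hTsub huT
      rw [Finset.mem_sdiff] at h
      exact h.2 (Finset.mem_filter.mpr ⟨Finset.mem_univ _, ⟨u, huS, Or.inl rfl⟩⟩)
    · intro u hu v hv hadj
      have h := hTsub hv
      rw [Finset.mem_sdiff] at h
      exact h.2 (Finset.mem_filter.mpr ⟨Finset.mem_univ _, ⟨u, hu, Or.inr hadj⟩⟩)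
  have hmassS : m ≤ ∑ u ∈ S₀, g u := by
    have h1 : ∑ v ∈ univ \ Nb, b v + ∑ v ∈ Nb, b v = k * m :=
      (Finset.sum_sdiff (Finset.subset_univ Nb)).trans hsb
    have h2 : ∑ v ∈ univ \ Nb, b v ≤ (k - 1) * m := by
      calc ∑ v ∈ univ \ Nb, b v ≤ (univ \ Nb).card • m :=
            Finset.sum_le_card_nsmul _ _ _ (fun x _ => hbm x)
        _ = (univ \ Nb).card * m := by rw [smul_eq_mul]
        _ ≤ (k - 1) * m := Nat.mul_le_mul_right _ (by omega)
    have hkm : (k - 1) * m + m = k * m := by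
      have hkk : k - 1 + 1 = k := by omega
      calc (k-1)*m + m = (k-1+1)*m := by ring
        _ = k * m := by rw [hkk]
    have h3 : m ≤ ∑ v ∈ Nb, b v := by omega
    have h4 : ∑ v ∈ Nb, b v ≤ ∑ u ∈ S₀, g u := by
      have hcomm : ∑ u ∈ S₀, g u
          = ∑ v ∈ univ, ∑ u ∈ S₀, (if u = v ∨ G.Adj u v then b v else 0) := by
        rw [Finset.sum_congr rfl (fun u _ => hgdef u)]
        exact Finset.sum_comm
      have hge : ∀ v ∈ Nb, b v ≤ ∑ u ∈ S₀, (if u = v ∨ G.Adj u v then b v else 0) := by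
        intro v hv
        rw [hNbdef, Finset.mem_filter] at hv
        obtain ⟨-, u, hu, huv⟩ := hv
        calc b v = (if u = v ∨ G.Adj u v then b v else 0) := (if_pos huv).symm
          _ ≤ ∑ u ∈ S₀, (if u = v ∨ G.Adj u v then b v else 0) :=
              Finset.single_le_sum (f := fun u => if u = v ∨ G.Adj u v then b v else 0)
                (fun i _ => Nat.zero_le _) hu
      calc ∑ v ∈ Nb, b v
          ≤ ∑ v ∈ Nb, ∑ u ∈ S₀, (if u = v ∨ G.Adj u v then b v else 0) :=
            Finset.sum_le_sum hge
        _ ≤ ∑ v ∈ univ, ∑ u ∈ S₀, (if u = v ∨ G.Adj u v then b v else 0) :=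
            Finset.sum_le_sum_of_subset (Finset.subset_univ _)
        _ = ∑ u ∈ S₀, g u := hcomm.symm
    omega
  -- greedy bound
  have hγ1 : ∀ u ∈ S₀, g u ≤ S₀.sup g := fun u hu => Finset.le_sup hu
  have hγ2 : ∀ v, v ∉ S₀ → S₀.sup g ≤ g v := fun v hv =>
    Finset.sup_le (fun u hu => hswap v hv u hu)
  have hsdiff_a : ∑ u ∈ univ \ S₀, a u = k * m - ∑ u ∈ S₀, a u := by
    have h := Finset.sum_sdiff (f := a) (Finset.subset_univ S₀)
    rw [hsa] at h
    omega
  have h5 : (k * m - ∑ u ∈ S₀, a u) * S₀.sup g ≤ ∑ u ∈ univ \ S₀, a u * g u := by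
    calc (k*m - ∑ u ∈ S₀, a u) * S₀.sup g = ∑ u ∈ univ \ S₀, a u * S₀.sup g := by
          rw [← Finset.sum_mul, hsdiff_a]
      _ ≤ ∑ u ∈ univ \ S₀, a u * g u := Finset.sum_le_sum (fun u hu =>
          Nat.mul_le_mul_left _ (hγ2 u (Finset.mem_sdiff.mp hu).2))
  have hS₀m : ∑ u ∈ S₀, (m - a u) = k * m - ∑ u ∈ S₀, a u := by
    have h6 : ∑ u ∈ S₀, ((m - a u) + a u) = k * m := by
      rw [Finset.sum_congr rfl (fun u _ => Nat.sub_add_cancel (ham u))]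
      rw [Finset.sum_const, hS₀card, smul_eq_mul]
    rw [Finset.sum_add_distrib] at h6
    omega
  have h7 : ∑ u ∈ S₀, (m - a u) * g u ≤ (k*m - ∑ u ∈ S₀, a u) * S₀.sup g := by
    calc ∑ u ∈ S₀, (m - a u) * g u ≤ ∑ u ∈ S₀, (m - a u) * S₀.sup g :=
          Finset.sum_le_sum (fun u hu => Nat.mul_le_mul_left _ (hγ1 u hu))
      _ = (k*m - ∑ u ∈ S₀, a u) * S₀.sup g := by rw [← Finset.sum_mul, hS₀m]
  have h8 : m * ∑ u ∈ S₀, g u = ∑ u ∈ S₀, a u * g u + ∑ u ∈ S₀, (m - a u) * g u := by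
    rw [Finset.mul_sum, ← Finset.sum_add_distrib]
    refine Finset.sum_congr rfl (fun u hu => ?_)
    have hau : a u + (m - a u) = m := by have := ham u; omega
    calc m * g u = (a u + (m - a u)) * g u := by rw [hau]
      _ = a u * g u + (m - a u) * g u := add_mul _ _ _
  have hsplit : ∑ u ∈ univ \ S₀, a u * g u + ∑ u ∈ S₀, a u * g u = ∑ u ∈ univ, a u * g u :=
    Finset.sum_sdiff (Finset.subset_univ S₀)
  calc m * m ≤ m * ∑ u ∈ S₀, g u := Nat.mul_le_mul_left m hmassS
    _ = ∑ u ∈ S₀, a u * g u + ∑ u ∈ S₀, (m - a u) * g u := h8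
    _ ≤ ∑ u ∈ S₀, a u * g u + (k*m - ∑ u ∈ S₀, a u) * S₀.sup g := Nat.add_le_add_left h7 _
    _ ≤ ∑ u ∈ S₀, a u * g u + ∑ u ∈ univ \ S₀, a u * g u := Nat.add_le_add_left h5 _
    _ = ∑ u ∈ univ, a u * g u := by rw [add_comm]; exact hsplit

private lemma qcost_le {W : Type*} [Fintype W] [DecidableEq W] (G : SimpleGraph W)
    [DecidableRel G.Adj] (m : ℕ) (V1 V2 : Finset (W × Fin m))
    (g : W → ℕ)
    (hgdef : ∀ u, g u = ∑ v, if u = v ∨ G.Adj u v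
      then ((V2 \ V1).filter (fun q => q.1 = v)).card else 0) :
    ∑ u, ((V1 \ V2).filter (fun p => p.1 = u)).card * g u ≤ repCost (blowup G m) V1 V2 := by
  classical
  have hAB : Disjoint (V1 \ V2) (V2 \ V1) := disjoint_sdiff_sdiff
  -- Step A : regroup the sum over A
  have stepA : ∑ u, ((V1 \ V2).filter (fun p => p.1 = u)).card * g u
      = ∑ p ∈ V1 \ V2, g p.1 := by
    have h1 : ∀ u, ((V1 \ V2).filter (fun p => p.1 = u)).card * g u
        = ∑ p ∈ V1 \ V2, if p.1 = u then g u else 0 := by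
      intro u
      rw [Finset.sum_ite, Finset.sum_const_zero, add_zero, Finset.sum_const, smul_eq_mul]
    calc ∑ u, ((V1 \ V2).filter (fun p => p.1 = u)).card * g u
        = ∑ u, ∑ p ∈ V1 \ V2, (if p.1 = u then g u else 0) :=
          Finset.sum_congr rfl (fun u _ => h1 u)
      _ = ∑ p ∈ V1 \ V2, ∑ u, (if p.1 = u then g u else 0) := Finset.sum_comm
      _ = ∑ p ∈ V1 \ V2, g p.1 := Finset.sum_congr rfl (fun p _ => by
          rw [Finset.sum_ite_eq, if_pos (Finset.mem_univ _)])
  -- Step B : g u as a card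
  have stepB : ∀ u : W, g u = ((V2 \ V1).filter (fun q => u = q.1 ∨ G.Adj u q.1)).card := by
    intro u
    have h1 : ∀ q : W × Fin m, (if u = q.1 ∨ G.Adj u q.1 then (1:ℕ) else 0)
        = ∑ v, if q.1 = v then (if u = v ∨ G.Adj u v then (1:ℕ) else 0) else 0 := by
      intro q
      rw [Finset.sum_ite_eq, if_pos (Finset.mem_univ _)]
    refine Eq.symm ?_
    calc ((V2 \ V1).filter (fun q => u = q.1 ∨ G.Adj u q.1)).card
        = ∑ q ∈ V2 \ V1, (if u = q.1 ∨ G.Adj u q.1 then (1:ℕ) else 0) :=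
          Finset.card_filter _ _
      _ = ∑ q ∈ V2 \ V1, ∑ v, (if q.1 = v then (if u = v ∨ G.Adj u v then (1:ℕ) else 0) else 0) :=
          Finset.sum_congr rfl (fun q _ => h1 q)
      _ = ∑ v, ∑ q ∈ V2 \ V1, (if q.1 = v then (if u = v ∨ G.Adj u v then (1:ℕ) else 0) else 0) :=
          Finset.sum_comm
      _ = ∑ v, (if u = v ∨ G.Adj u v then ((V2 \ V1).filter (fun q => q.1 = v)).card else 0) := by
          refine Finset.sum_congr rfl (fun v _ => ?_)
          by_cases h : u = v ∨ G.Adj u v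
          · rw [if_pos h]
            simp only [if_pos h]
            exact Eq.symm (Finset.card_filter (fun q => q.1 = v) (V2 \ V1))
          · simp [h]
      _ = g u := (hgdef u).symm
  have stepB2 : ∀ p ∈ V1 \ V2,
      g p.1 ≤ ((V2 \ V1).filter (fun q => (blowup G m).Adj p q)).card := by
    intro p hp
    rw [stepB p.1]
    apply Finset.card_le_card
    intro q hq
    rw [Finset.mem_filter] at hq ⊢
    refine ⟨hq.1, ?_⟩
    rcases hq.2 with heq | hadj
    · refine Or.inl ⟨heq, ?_⟩
      intro h2
      have hpq : p = q := Prod.ext heq h2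
      exact Finset.disjoint_left.mp hAB hp (hpq ▸ hq.1)
    · exact Or.inr hadj
  -- Step C : inject pairs into edges
  have stepC : ∑ p ∈ V1 \ V2, ((V2 \ V1).filter (fun q => (blowup G m).Adj p q)).card
      ≤ repCost (blowup G m) V1 V2 := by
    have hC1 : ∑ p ∈ V1 \ V2, ((V2 \ V1).filter (fun q => (blowup G m).Adj p q)).card
        = (((V1 \ V2) ×ˢ (V2 \ V1)).filter (fun z => (blowup G m).Adj z.1 z.2)).card := by
      rw [Finset.card_filter, Finset.sum_product]
      refine Finset.sum_congr rfl (fun p _ => ?_)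
      rw [Finset.card_filter]
    rw [hC1]
    unfold repCost
    apply Finset.card_le_card_of_injOn (fun z => s(z.1, z.2))
    · intro z hz
      rw [Finset.mem_coe, Finset.mem_filter] at hz
      obtain ⟨hzAB, hadj⟩ := hz
      rw [Finset.mem_product] at hzAB
      rw [Finset.mem_coe, Finset.mem_filter]
      exact ⟨SimpleGraph.mem_edgeFinset.mpr ((SimpleGraph.mem_edgeSet _).mpr hadj),
        z.1, hzAB.1, z.2, hzAB.2, rfl⟩
    · intro z hz z' hz' heq
      have hz1 := Finset.mem_filter.mp (Finset.mem_coe.mp hz)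
      have hz'1 := Finset.mem_filter.mp (Finset.mem_coe.mp hz')
      rw [Sym2.eq_iff] at heq
      rcases heq with ⟨h1, h2⟩ | ⟨h1, h2⟩
      · exact Prod.ext h1 h2
      · exfalso
        have hz1A : z.1 ∈ V1 \ V2 := (Finset.mem_product.mp hz1.1).1
        have hz'2B : z'.2 ∈ V2 \ V1 := (Finset.mem_product.mp hz'1.1).2
        exact Finset.disjoint_left.mp hAB hz1A (h1 ▸ hz'2B)
  calc ∑ u, ((V1 \ V2).filter (fun p => p.1 = u)).card * g u
      = ∑ p ∈ V1 \ V2, g p.1 := stepA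
    _ ≤ ∑ p ∈ V1 \ V2, ((V2 \ V1).filter (fun q => (blowup G m).Adj p q)).card :=
        Finset.sum_le_sum stepB2
    _ ≤ repCost (blowup G m) V1 V2 := stepC

set_option maxHeartbeats 1600000 in
/-- Let `G` be a finite simple graph on a vertex set `W` with `|W| = N`, let
`m ≥ 2` and `t` be integers with `2t ≥ N`, and consider the `m`-blowup `G'` of `G`. Then the
minimum, over all pairs of sets `V1, V2 ⊆ W × {1,…,m}` with `V1 ∪ V2 = W × {1,…,m}` and
`|V1| = |V2| = t·m`, of the number of edges of `G'` having one endpoint in `V1 ∖ V2` and the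
other in `V2 ∖ V1`, is either equal to `0` or at least `m²/4`. -/
theorem stmt6 {W : Type*} [Fintype W] [DecidableEq W]
    (G : SimpleGraph W) [DecidableRel G.Adj]
    (N m t : ℕ) (hN : Fintype.card W = N) (hm : 2 ≤ m) (ht : N ≤ 2 * t) :
    (∃ V1 V2 : Finset (W × Fin m), V1 ∪ V2 = Finset.univ ∧
      V1.card = t * m ∧ V2.card = t * m ∧ repCost (blowup G m) V1 V2 = 0) ∨
    (∀ V1 V2 : Finset (W × Fin m), V1 ∪ V2 = Finset.univ →
      V1.card = t * m → V2.card = t * m →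
      (m : ℝ) ^ 2 / 4 ≤ (repCost (blowup G m) V1 V2 : ℝ)) := by
  classical
  have hm0 : 0 < m := by omega
  by_cases htN : t ≤ N
  · -- main case
    by_cases hex : ∃ S T : Finset W, S.card = N - t ∧ T.card = N - t ∧ Disjoint S T ∧
        ∀ u ∈ S, ∀ v ∈ T, ¬ G.Adj u v
    · left
      obtain ⟨S, T, hS, hT, hST, hadjST⟩ := hex
      refine ⟨univ \ (T ×ˢ univ), univ \ (S ×ˢ univ), ?_, ?_, ?_, ?_⟩
      · ext p
        simp only [Finset.mem_union, Finset.mem_sdiff, Finset.mem_univ, true_and,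
          Finset.mem_product, and_true, iff_true]
        by_cases hpT : p.1 ∈ T
        · exact Or.inr (fun h => Finset.disjoint_left.mp hST h hpT)
        · exact Or.inl hpT
      · rw [Finset.card_sdiff_of_subset (Finset.subset_univ _), Finset.card_univ, Fintype.card_prod,
          Fintype.card_fin, hN, Finset.card_product, hT, Finset.card_univ, Fintype.card_fin,
          ← Nat.sub_mul]
        congr 1
        omega
      · rw [Finset.card_sdiff_of_subset (Finset.subset_univ _), Finset.card_univ, Fintype.card_prod,
          Fintype.card_fin, hN, Finset.card_product, hS, Finset.card_univ, Fintype.card_fin,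
          ← Nat.sub_mul]
        congr 1
        omega
      · rw [repCost, Finset.card_eq_zero, Finset.filter_eq_empty_iff]
        intro e he
        rintro ⟨p, hp, q, hq, rfl⟩
        rw [Finset.mem_sdiff] at hp hq
        have hp1 : p.1 ∈ S := by
          have h := hp.2
          simp only [Finset.mem_sdiff, Finset.mem_univ, true_and, not_not,
            Finset.mem_product, and_true] at h
          exact h
        have hq1 : q.1 ∈ T := by
          have h := hq.2
          simp only [Finset.mem_sdiff, Finset.mem_univ, true_and, not_not,
            Finset.mem_product, and_true] at h
          exact h
        have hadj : (blowup G m).Adj p q :=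
          (SimpleGraph.mem_edgeSet _).mp (SimpleGraph.mem_edgeFinset.mp he)
        rcases hadj with ⟨h1, -⟩ | h1
        · exact Finset.disjoint_left.mp hST (h1 ▸ hp1) hq1
        · exact hadjST p.1 hp1 q.1 hq1 h1
    · right
      intro V1 V2 hu h1 h2
      have hcardU : (univ : Finset (W × Fin m)).card = N * m := by
        rw [Finset.card_univ, Fintype.card_prod, Fintype.card_fin, hN]
      have hAeq : V1 \ V2 = univ \ V2 := by rw [← hu, Finset.union_sdiff_right]
      have hBeq : V2 \ V1 = univ \ V1 := by rw [← hu, Finset.union_sdiff_left]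
      have hAcard : (V1 \ V2).card = (N - t) * m := by
        rw [hAeq, Finset.card_sdiff_of_subset (Finset.subset_univ _), hcardU, h2, ← Nat.sub_mul]
      have hBcard : (V2 \ V1).card = (N - t) * m := by
        rw [hBeq, Finset.card_sdiff_of_subset (Finset.subset_univ _), hcardU, h1, ← Nat.sub_mul]
      have hsa : ∑ u, ((V1 \ V2).filter (fun p => p.1 = u)).card = (N - t) * m := by
        rw [← hAcard]
        exact (Finset.card_eq_sum_card_fiberwise (fun p _ => Finset.mem_univ p.1)).symm
      have hsb : ∑ v, ((V2 \ V1).filter (fun q => q.1 = v)).card = (N - t) * m := by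
        rw [← hBcard]
        exact (Finset.card_eq_sum_card_fiberwise (fun p _ => Finset.mem_univ p.1)).symm
      have hfib : ∀ u : W, ((V1 \ V2).filter (fun p => p.1 = u)).card
          + ((V2 \ V1).filter (fun p => p.1 = u)).card ≤ m := by
        intro u
        have hdisj : Disjoint ((V1 \ V2).filter (fun p => p.1 = u))
            ((V2 \ V1).filter (fun p => p.1 = u)) :=
          Finset.disjoint_filter_filter disjoint_sdiff_sdiff
        have hsub : (V1 \ V2).filter (fun p => p.1 = u) ∪ (V2 \ V1).filter (fun p => p.1 = u)
            ⊆ univ.filter (fun p : W × Fin m => p.1 = u) :=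
          Finset.union_subset (Finset.filter_subset_filter _ (Finset.subset_univ _))
            (Finset.filter_subset_filter _ (Finset.subset_univ _))
        have hcard : (univ.filter (fun p : W × Fin m => p.1 = u)).card = m := by
          have hset : univ.filter (fun p : W × Fin m => p.1 = u) = {u} ×ˢ univ := by
            ext ⟨x, y⟩
            simp [Finset.mem_product, eq_comm]
          rw [hset, Finset.card_product, Finset.card_singleton, Finset.card_univ,
            Fintype.card_fin, one_mul]
        calc ((V1 \ V2).filter (fun p => p.1 = u)).card
              + ((V2 \ V1).filter (fun p => p.1 = u)).card
            = ((V1 \ V2).filter (fun p => p.1 = u)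
                ∪ (V2 \ V1).filter (fun p => p.1 = u)).card :=
              (Finset.card_union_of_disjoint hdisj).symm
          _ ≤ m := le_trans (Finset.card_le_card hsub) (le_of_eq hcard)
      have hk1 : 1 ≤ N - t := by
        rcases Nat.eq_zero_or_pos (N - t) with h0 | h
        · exact absurd ⟨∅, ∅, by simp [h0], by simp [h0], by simp, by simp⟩ hex
        · exact h
      have hkN : N - t ≤ Fintype.card W := by rw [hN]; omega
      have hcore := core_lb G m (N - t) hk1 hkN
        (fun S T hSc hTc hd hn => hex ⟨S, T, hSc, hTc, hd, hn⟩)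
        (fun u => ((V1 \ V2).filter (fun p => p.1 = u)).card)
        (fun v => ((V2 \ V1).filter (fun q => q.1 = v)).card)
        (fun u => le_trans (Nat.le_add_right _ _) (hfib u))
        (fun u => le_trans (Nat.le_add_left _ _) (hfib u))
        hsa hsb
        (fun u => ∑ v, if u = v ∨ G.Adj u v
          then ((V2 \ V1).filter (fun q => q.1 = v)).card else 0)
        (fun u => rfl)
      have hq := qcost_le G m V1 V2
        (fun u => ∑ v, if u = v ∨ G.Adj u v
          then ((V2 \ V1).filter (fun q => q.1 = v)).card else 0)
        (fun u => rfl)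
      have hfinal : m * m ≤ repCost (blowup G m) V1 V2 := le_trans hcore hq
      have hcast : ((m * m : ℕ) : ℝ) ≤ (repCost (blowup G m) V1 V2 : ℝ) :=
        Nat.cast_le.mpr hfinal
      push_cast at hcast
      nlinarith [sq_nonneg (m : ℝ), hcast]
  · right
    intro V1 V2 hu h1 h2
    have hle : t * m ≤ N * m := by
      have h := Finset.card_le_card (Finset.subset_univ V1)
      rw [h1, Finset.card_univ, Fintype.card_prod, Fintype.card_fin, hN] at h
      exact h
    exact absurd (Nat.le_of_mul_le_mul_right hle hm0) htN
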